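/- Let L₀ := (1/2)P(φ₁) + P(φ₂) + (1/2)P(φ₃) and B₀ := (1/2)P(φ₀) + P(φ₁) + (3/2)P(φ₂) + P(φ₃), both 2×2 Hermitian matrices. Then L₀ - (1/3)B₀ and (3/5)B₀ - L₀ are both positive semidefinite, and both bounds are attained: there exist nonzero vectors u, v ∈ ℂ² with ⟨u, L₀u⟩ = (1/3)⟨u, B₀u⟩ and ⟨v, L₀v⟩ = (3/5)⟨v, B₀v⟩. (Equivalently, the eigenvalues of B₀^{-1/2} L₀ B₀^{-1/2} are exactly 1/3 and 3/5.) -/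

import Mathlib

open Matrix Real
open scoped ComplexOrder

noncomputable section

/-- Standard basis vector `e₀` of `ℂ²`. -/
def e0 : Fin 2 → ℂ := ![1, 0]
/-- Standard basis vector `e₁` of `ℂ²`. -/
def e1 : Fin 2 → ℂ := ![0, 1]

/-- `P(v) = v v†`, the rank-one matrix associated with `v ∈ ℂ²`. -/
def P (v : Fin 2 → ℂ) : Matrix (Fin 2) (Fin 2) ℂ := vecMulVec v (star v)

/-- The rotation `R = cos(π/4)·I + sin(π/4)·(e₁e₀† - e₀e₁†)`. -/
def Rrot : Matrix (Fin 2) (Fin 2) ℂ :=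
  (Real.cos (π / 4) : ℂ) • 1 +
    (Real.sin (π / 4) : ℂ) • (vecMulVec e1 (star e0) - vecMulVec e0 (star e1))

/-- The SARG04 states `φ_m = R^{-m} φ₀` with `φ₀ = cos(π/8) e₀ + sin(π/8) e₁`,
indices effectively taken modulo 4. -/
def φ (m : ℤ) : Fin 2 → ℂ :=
  (Rrot ^ (-m)).mulVec ((Real.cos (π / 8) : ℂ) • e0 + (Real.sin (π / 8) : ℂ) • e1)
/-- The matrix `L₀` for the single-photon SARG04 intercept-and-resend analysis. -/
def L0 : Matrix (Fin 2) (Fin 2) ℂ :=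
  ((1 : ℂ) / 2) • P (φ 1) + P (φ 2) + ((1 : ℂ) / 2) • P (φ 3)

/-- The matrix `B₀` for the single-photon SARG04 intercept-and-resend analysis. -/
def B0 : Matrix (Fin 2) (Fin 2) ℂ :=
  ((1 : ℂ) / 2) • P (φ 0) + P (φ 1) + ((3 : ℂ) / 2) • P (φ 2) + P (φ 3)

local notation "k" => ((Real.sqrt 2 / 2 : ℝ) : ℂ)

lemma hk2 : k * k = 1/2 := by
  norm_cast
  rw [div_mul_div_comm, Real.mul_self_sqrt (by norm_num)]
  norm_num

lemma Rrot_eq : Rrot = !![k, -k; k, k] := by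
  rw [Rrot, Real.cos_pi_div_four, Real.sin_pi_div_four]
  ext i j
  fin_cases i <;> fin_cases j <;>
    simp [e0, e1, vecMulVec, Matrix.one_apply]

lemma h2 : ((Real.sqrt 2 : ℝ) : ℂ) ^ 2 = 2 := by
  norm_cast; exact Real.sq_sqrt (by norm_num)

lemma Rrot2 : Rrot * Rrot = !![0, -1; 1, 0] := by
  rw [Rrot_eq]
  ext i j
  fin_cases i <;> fin_cases j <;>
    simp [Matrix.mul_apply, Fin.sum_univ_succ] <;> push_cast <;> ring_nf <;>
    simp [h2] <;> ring_nf <;> simp [h2]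

lemma Rrot_inv : Rrot⁻¹ = !![k, k; -k, k] := by
  apply Matrix.inv_eq_right_inv
  rw [Rrot_eq]
  ext i j
  fin_cases i <;> fin_cases j <;>
    simp [Matrix.mul_apply, Fin.sum_univ_succ, Matrix.one_apply] <;> push_cast <;> ring_nf <;>
    simp [h2] <;> ring_nf <;> simp [h2]

local notation "c" => ((Real.cos (π/8) : ℝ) : ℂ)
local notation "s" => ((Real.sin (π/8) : ℝ) : ℂ)

lemma phi0 : φ 0 = ![c, s] := by
  rw [φ, neg_zero, zpow_zero, Matrix.one_mulVec]
  funext i; fin_cases i <;> simp [e0, e1]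

lemma phi1 : φ 1 = ![k*(c+s), k*(s-c)] := by
  rw [φ, Matrix.zpow_neg_one, Rrot_inv]
  funext i; fin_cases i <;>
    simp [e0, e1, Matrix.mulVec, dotProduct, Fin.sum_univ_succ] <;> ring

lemma R2_inv : (!![0, -1; 1, 0] : Matrix (Fin 2) (Fin 2) ℂ)⁻¹ = !![0, 1; -1, 0] := by
  apply Matrix.inv_eq_right_inv
  ext i j
  fin_cases i <;> fin_cases j <;>
    simp [Matrix.mul_apply, Fin.sum_univ_succ, Matrix.one_apply]

lemma phi2 : φ 2 = ![s, -c] := by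
  rw [φ, show (-2 : ℤ) = -(2:ℕ) by norm_num, Matrix.zpow_neg_natCast, pow_two, Rrot2, R2_inv]
  funext i; fin_cases i <;>
    simp [e0, e1, Matrix.mulVec, dotProduct, Fin.sum_univ_succ]

lemma Rrot3 : Rrot ^ 3 = !![-k, -k; k, -k] := by
  rw [pow_succ, pow_two, Rrot2, Rrot_eq]
  ext i j
  fin_cases i <;> fin_cases j <;>
    simp [Matrix.mul_apply, Fin.sum_univ_succ]

lemma R3_inv : (!![-k, -k; k, -k] : Matrix (Fin 2) (Fin 2) ℂ)⁻¹ = !![-k, k; -k, -k] := by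
  apply Matrix.inv_eq_right_inv
  ext i j
  fin_cases i <;> fin_cases j <;>
    simp [Matrix.mul_apply, Fin.sum_univ_succ, Matrix.one_apply] <;> ring_nf <;>
    simp [h2] <;> ring_nf <;> simp [h2]

lemma phi3 : φ 3 = ![k*(s-c), -(k*(c+s))] := by
  rw [φ, show (-3 : ℤ) = -(3:ℕ) by norm_num, Matrix.zpow_neg_natCast, Rrot3, R3_inv]
  funext i; fin_cases i <;>
    simp [e0, e1, Matrix.mulVec, dotProduct, Fin.sum_univ_succ] <;> ring

lemma lemA : Real.sqrt 2 / 2 * (Real.cos (π/8) + Real.sin (π/8)) = Real.cos (π/8) := by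
  have h := Real.cos_sub (π/8) (π/4)
  rw [Real.cos_pi_div_four, Real.sin_pi_div_four, show π/8 - π/4 = -(π/8) by ring,
    Real.cos_neg] at h
  linarith [h]

lemma lemB : Real.sqrt 2 / 2 * (Real.sin (π/8) - Real.cos (π/8)) = -Real.sin (π/8) := by
  have h := Real.sin_sub (π/8) (π/4)
  rw [Real.cos_pi_div_four, Real.sin_pi_div_four, show π/8 - π/4 = -(π/8) by ring,
    Real.sin_neg] at h
  linarith [h]

lemma phi1' : φ 1 = ![c, -s] := by
  rw [phi1]
  funext i; fin_cases i
  · show k * (c + s) = c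
    exact_mod_cast congrArg (Complex.ofReal) lemA
  · show k * (s - c) = -s
    exact_mod_cast congrArg (Complex.ofReal) lemB

lemma phi3' : φ 3 = ![-s, -c] := by
  rw [phi3]
  funext i; fin_cases i
  · show k * (s - c) = -s
    exact_mod_cast congrArg (Complex.ofReal) lemB
  · show -(k * (c + s)) = -c
    have := congrArg (Complex.ofReal) lemA
    push_cast at this ⊢
    rw [this]

lemma ha : Real.cos (π/8) ^ 2 = (2 + Real.sqrt 2) / 4 := by
  have := Real.cos_sq (π/8)
  rw [show 2 * (π/8) = π/4 by ring, Real.cos_pi_div_four] at this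
  linarith

lemma hb : Real.sin (π/8) ^ 2 = (2 - Real.sqrt 2) / 4 := by
  have := Real.sin_sq (π/8)
  rw [ha] at this; linarith

lemma hab : Real.cos (π/8) * Real.sin (π/8) = Real.sqrt 2 / 4 := by
  have := Real.sin_two_mul (π/8)
  rw [show 2 * (π/8) = π/4 by ring, Real.sin_pi_div_four] at this
  linarith

lemma haC : ((Real.cos (π/8) : ℝ) : ℂ)^2 = (2 + ((Real.sqrt 2 : ℝ) : ℂ))/4 := by
  have := congrArg (Complex.ofReal) ha
  push_cast [-Complex.ofReal_cos] at this
  exact this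

lemma hbC : ((Real.sin (π/8) : ℝ) : ℂ)^2 = (2 - ((Real.sqrt 2 : ℝ) : ℂ))/4 := by
  have := congrArg (Complex.ofReal) hb
  push_cast [-Complex.ofReal_sin] at this
  exact this

lemma habC : ((Real.cos (π/8) : ℝ) : ℂ) * ((Real.sin (π/8) : ℝ) : ℂ)
    = ((Real.sqrt 2 : ℝ) : ℂ)/4 := by
  have := congrArg (Complex.ofReal) hab
  push_cast [-Complex.ofReal_sin, -Complex.ofReal_cos] at this
  exact this

lemma L0_eq : L0 = !![(((4 - Real.sqrt 2)/4 : ℝ) : ℂ), ((-(Real.sqrt 2/4) : ℝ) : ℂ);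
    ((-(Real.sqrt 2/4) : ℝ) : ℂ), (((4 + Real.sqrt 2)/4 : ℝ) : ℂ)] := by
  rw [L0]; rw [phi1', phi2, phi3']
  ext i j
  fin_cases i <;> fin_cases j <;>
    simp [-Real.cos_pi_div_eight, -Real.sin_pi_div_eight, -Complex.ofReal_cos,
      -Complex.ofReal_sin, P, vecMulVec, Complex.conj_ofReal] <;>
    push_cast [-Complex.ofReal_cos, -Complex.ofReal_sin]
  · linear_combination (1/2 : ℂ) * haC + (3/2 : ℂ) * hbC
  · linear_combination (-1 : ℂ) * habC
  · linear_combination (-1 : ℂ) * habC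
  · linear_combination (3/2 : ℂ) * haC + (1/2 : ℂ) * hbC

lemma B0_eq : B0 = !![(((8 - Real.sqrt 2)/4 : ℝ) : ℂ), ((-(Real.sqrt 2/4) : ℝ) : ℂ);
    ((-(Real.sqrt 2/4) : ℝ) : ℂ), (((8 + Real.sqrt 2)/4 : ℝ) : ℂ)] := by
  rw [B0]; rw [phi0, phi1', phi2, phi3']
  ext i j
  fin_cases i <;> fin_cases j <;>
    simp [-Real.cos_pi_div_eight, -Real.sin_pi_div_eight, -Complex.ofReal_cos,
      -Complex.ofReal_sin, P, vecMulVec, Complex.conj_ofReal] <;>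
    push_cast [-Complex.ofReal_cos, -Complex.ofReal_sin]
  · linear_combination (3/2 : ℂ) * haC + (5/2 : ℂ) * hbC
  · linear_combination (-1 : ℂ) * habC
  · linear_combination (-1 : ℂ) * habC
  · linear_combination (5/2 : ℂ) * haC + (3/2 : ℂ) * hbC

lemma psd_of (p q r : ℝ) (hp : 0 ≤ p) (hr : 0 ≤ r) (hq : q^2 ≤ p*r) :
    (!![(p:ℂ), (q:ℂ); (q:ℂ), (r:ℂ)]).PosSemidef := by
  refine Matrix.PosSemidef.of_dotProduct_mulVec_nonneg ?_ ?_
  · ext i j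
    fin_cases i <;> fin_cases j <;>
      simp [Matrix.conjTranspose_apply, Complex.conj_ofReal]
  · intro x
    have hx : star x ⬝ᵥ (!![(p:ℂ), (q:ℂ); (q:ℂ), (r:ℂ)]).mulVec x =
        ((p*((x 0).re^2+(x 0).im^2) + 2*q*((x 0).re*(x 1).re + (x 0).im*(x 1).im)
          + r*((x 1).re^2+(x 1).im^2) : ℝ) : ℂ) := by
      simp only [dotProduct, Matrix.mulVec, Fin.sum_univ_succ, Fin.sum_univ_zero,
        Pi.star_apply, Matrix.cons_val', Matrix.cons_val_zero, Matrix.cons_val_one,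
        Matrix.head_cons, Matrix.empty_val', Matrix.cons_val_fin_one, Matrix.head_fin_const,
        add_zero]
      apply Complex.ext <;>
        simp [Complex.add_re, Complex.add_im, Complex.mul_re, Complex.mul_im, ← Complex.ofReal_pow] <;> ring
    rw [hx, Complex.zero_le_real]
    set x0 := (x 0).re; set y0 := (x 0).im; set x1 := (x 1).re; set y1 := (x 1).im
    rcases eq_or_lt_of_le hp with h | h
    · have hq0 : q = 0 := by nlinarith [sq_nonneg q]
      rw [← h, hq0]
      nlinarith [sq_nonneg x1, sq_nonneg y1]
    · nlinarith [sq_nonneg (p*x0+q*x1), sq_nonneg (p*y0+q*y1),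
        mul_nonneg (sub_nonneg.mpr hq) (add_nonneg (sq_nonneg x1) (sq_nonneg y1)), h.le]

lemma sqrt2_le_two : Real.sqrt 2 ≤ 2 := by
  nlinarith [Real.sq_sqrt (show (0:ℝ) ≤ 2 by norm_num), Real.sqrt_nonneg 2]

/-- The generalized eigenvalues of the pencil `(L₀, B₀)` are exactly `1/3` and `3/5`:
both `L₀ - (1/3)B₀` and `(3/5)B₀ - L₀` are positive semidefinite, and both bounds
are attained by nonzero vectors. -/
theorem sarg04_single_photon_eigenvalue_bounds :
    (L0 - ((1 : ℂ) / 3) • B0).PosSemidef ∧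
    (((3 : ℂ) / 5) • B0 - L0).PosSemidef ∧
    (∃ u : Fin 2 → ℂ, u ≠ 0 ∧
      star u ⬝ᵥ L0.mulVec u = ((1 : ℂ) / 3) * (star u ⬝ᵥ B0.mulVec u)) ∧
    (∃ v : Fin 2 → ℂ, v ≠ 0 ∧
      star v ⬝ᵥ L0.mulVec v = ((3 : ℂ) / 5) * (star v ⬝ᵥ B0.mulVec v)) := by
  have hs0 := Real.sqrt_nonneg 2
  have hs2 := Real.sq_sqrt (show (0:ℝ) ≤ 2 by norm_num)
  refine ⟨?_, ?_, ?_, ?_⟩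
  · have hM : L0 - ((1 : ℂ) / 3) • B0 =
        !![(((2 - Real.sqrt 2)/6 : ℝ) : ℂ), ((-(Real.sqrt 2/6) : ℝ) : ℂ);
           ((-(Real.sqrt 2/6) : ℝ) : ℂ), (((2 + Real.sqrt 2)/6 : ℝ) : ℂ)] := by
      rw [L0_eq, B0_eq]
      ext i j
      fin_cases i <;> fin_cases j <;>
        simp [Matrix.sub_apply, Matrix.smul_apply] <;> push_cast <;> ring
    rw [hM]
    exact psd_of _ _ _ (by nlinarith [sqrt2_le_two]) (by nlinarith) (by nlinarith)
  · have hM : ((3 : ℂ) / 5) • B0 - L0 =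
        !![(((2 + Real.sqrt 2)/10 : ℝ) : ℂ), ((Real.sqrt 2/10 : ℝ) : ℂ);
           ((Real.sqrt 2/10 : ℝ) : ℂ), (((2 - Real.sqrt 2)/10 : ℝ) : ℂ)] := by
      rw [L0_eq, B0_eq]
      ext i j
      fin_cases i <;> fin_cases j <;>
        simp [Matrix.sub_apply, Matrix.smul_apply] <;> push_cast <;> ring
    rw [hM]
    exact psd_of _ _ _ (by nlinarith) (by nlinarith [sqrt2_le_two]) (by nlinarith)
  · refine ⟨![1, ((Real.sqrt 2 - 1 : ℝ) : ℂ)], ?_, ?_⟩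
    · intro h
      have := congrFun h 0
      simp at this
    · rw [L0_eq, B0_eq]
      simp [dotProduct, Matrix.mulVec, Fin.sum_univ_succ, Complex.conj_ofReal]
      push_cast
      linear_combination ((((Real.sqrt 2 : ℝ) : ℂ) - 2)/6) * h2
  · refine ⟨![1, ((-(Real.sqrt 2 + 1) : ℝ) : ℂ)], ?_, ?_⟩
    · intro h
      have := congrFun h 0
      simp at this
    · rw [L0_eq, B0_eq]
      simp [dotProduct, Matrix.mulVec, Fin.sum_univ_succ, Complex.conj_ofReal]
      push_cast
      linear_combination ((((Real.sqrt 2 : ℝ) : ℂ) + 2)/10) * h2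

end
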